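/- Pointwise convergence does not imply convergence in ℍ: the functions fₙ(x) = xⁿ(1 − xⁿ) converge pointwise to 0 on [0,1], yet ℍ(fₙ, f₀) → 0 where f₀(1) = 1/4 and f₀(x) = 0 for x ∈ [0,1); in particular ℍ(fₙ, 0) does not converge to 0. -/

import Mathlib

open Set Metric Filter

def hypo (f : ℝ → ℝ) : Set (EuclideanSpace ℝ (Fin 2)) :=
  {p | p 0 ∈ Set.Icc (0:ℝ) 1 ∧ 0 ≤ p 1 ∧ p 1 ≤ f (p 0)}

noncomputable def HH (f g : ℝ → ℝ) : ℝ := Metric.hausdorffDist (hypo f) (hypo g)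

def pt (a b : ℝ) : EuclideanSpace ℝ (Fin 2) := WithLp.toLp 2 ![a, b]

example (a b : ℝ) : pt a b 0 = a := rfl
example (a b : ℝ) : pt a b 1 = b := rfl

lemma coord_le_dist (p q : EuclideanSpace ℝ (Fin 2)) (i : Fin 2) : |p i - q i| ≤ dist p q := by
  rw [EuclideanSpace.dist_eq]
  have h : |p i - q i| = Real.sqrt (dist (p i) (q i) ^ 2) := by
    rw [Real.sqrt_sq_eq_abs, Real.dist_eq, abs_abs]
  rw [h]
  exact Real.sqrt_le_sqrt (Finset.single_le_sum (f := fun j => dist (p j) (q j) ^ 2)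
    (fun j _ => sq_nonneg _) (Finset.mem_univ i))

lemma dist_le_pt (p : EuclideanSpace ℝ (Fin 2)) (c d : ℝ) :
    dist p (pt c d) ≤ |p 0 - c| + |p 1 - d| := by
  rw [EuclideanSpace.dist_eq, Fin.sum_univ_two]
  have h0 : pt c d 0 = c := rfl
  have h1 : pt c d 1 = d := rfl
  rw [h0, h1, Real.dist_eq, Real.dist_eq]
  have hle : |p 0 - c| ^ 2 + |p 1 - d| ^ 2 ≤ (|p 0 - c| + |p 1 - d|) ^ 2 := by
    nlinarith [abs_nonneg (p 0 - c), abs_nonneg (p 1 - d)]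
  calc Real.sqrt (|p 0 - c| ^ 2 + |p 1 - d| ^ 2) ≤ Real.sqrt ((|p 0 - c| + |p 1 - d|) ^ 2) :=
        Real.sqrt_le_sqrt hle
    _ = |p 0 - c| + |p 1 - d| := Real.sqrt_sq (by positivity)

lemma mem_hypo_pt {f : ℝ → ℝ} {a b : ℝ} (ha : a ∈ Set.Icc (0:ℝ) 1) (hb : 0 ≤ b)
    (hbf : b ≤ f a) : pt a b ∈ hypo f := ⟨ha, hb, hbf⟩

lemma key_ineq (n : ℕ) {x : ℝ} (hx0 : 0 ≤ x) (hx1 : x ≤ 1) :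
    ((n:ℝ) + 1) * (x ^ n * (1 - x)) ≤ 1 := by
  have hgeom : (∑ i ∈ Finset.range (n+1), x ^ i) * (x - 1) = x ^ (n+1) - 1 := geom_sum_mul x (n+1)
  have hsum : ((n:ℝ) + 1) * x ^ n ≤ ∑ i ∈ Finset.range (n+1), x ^ i := by
    have : ∀ i ∈ Finset.range (n+1), x ^ n ≤ x ^ i := fun i hi =>
      pow_le_pow_of_le_one hx0 hx1 (Nat.lt_succ_iff.mp (Finset.mem_range.mp hi))
    calc ((n:ℝ) + 1) * x ^ n = ∑ _i ∈ Finset.range (n+1), x ^ n := by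
          rw [Finset.sum_const, Finset.card_range]; ring
      _ ≤ _ := Finset.sum_le_sum this
  have hxn1 : 0 ≤ x ^ (n+1) := pow_nonneg hx0 _
  nlinarith [pow_nonneg hx0 n]

lemma hypo_nonempty (f : ℝ → ℝ) (hf : 0 ≤ f 0) : (hypo f).Nonempty :=
  ⟨pt 0 0, ⟨⟨le_refl _, zero_le_one⟩, le_refl _, hf⟩⟩

lemma hypo_bounded {f : ℝ → ℝ} (hf : ∀ x ∈ Set.Icc (0:ℝ) 1, f x ≤ 1) :
    Bornology.IsBounded (hypo f) := by
  apply (Metric.isBounded_closedBall (x := pt 0 0) (r := 2)).subset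
  intro p hp
  obtain ⟨⟨h0, h1⟩, h2, h3⟩ := hp
  have hf1 : p 1 ≤ 1 := h3.trans (hf _ ⟨h0, h1⟩)
  have := dist_le_pt p 0 0
  simp only [Metric.mem_closedBall]
  rw [dist_comm] at this ⊢
  calc dist (pt 0 0) p = dist p (pt 0 0) := dist_comm _ _
    _ ≤ |p 0 - 0| + |p 1 - 0| := dist_le_pt p 0 0
    _ ≤ 2 := by rw [abs_of_nonneg (by linarith), abs_of_nonneg (by linarith)]; linarith

lemma fn_nonneg (n : ℕ) {x : ℝ} (hx0 : 0 ≤ x) (hx1 : x ≤ 1) : 0 ≤ x ^ n * (1 - x ^ n) := by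
  have h1 : x ^ n ≤ 1 := pow_le_one₀ hx0 hx1
  have h2 : 0 ≤ x ^ n := pow_nonneg hx0 n
  nlinarith

lemma fn_le_one (n : ℕ) {x : ℝ} (hx0 : 0 ≤ x) (hx1 : x ≤ 1) : x ^ n * (1 - x ^ n) ≤ 1 := by
  have h1 : x ^ n ≤ 1 := pow_le_one₀ hx0 hx1
  have h2 : 0 ≤ x ^ n := pow_nonneg hx0 n
  nlinarith

lemma fn_le_quarter (n : ℕ) {x : ℝ} (hx0 : 0 ≤ x) (hx1 : x ≤ 1) :
    x ^ n * (1 - x ^ n) ≤ 1/4 := by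
  nlinarith [sq_nonneg (x ^ n - 1/2)]

noncomputable def xn (n : ℕ) : ℝ := (2:ℝ) ^ (-(n:ℝ)⁻¹)

lemma xn_pos (n : ℕ) : 0 < xn n := Real.rpow_pos_of_pos two_pos _

lemma xn_le_one (n : ℕ) : xn n ≤ 1 :=
  Real.rpow_le_one_of_one_le_of_nonpos one_le_two (neg_nonpos.mpr (by positivity))

lemma xn_pow (n : ℕ) (hn : 1 ≤ n) : xn n ^ n = 1/2 := by
  have hn' : (n:ℝ) ≠ 0 := Nat.cast_ne_zero.mpr (by omega)
  rw [xn, ← Real.rpow_natCast ((2:ℝ) ^ (-(n:ℝ)⁻¹)) n, ← Real.rpow_mul (by norm_num)]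
  rw [neg_mul, inv_mul_cancel₀ hn', Real.rpow_neg_one]
  norm_num

noncomputable def cb (n : ℕ) : ℝ := Real.sqrt ((n:ℝ)+1)⁻¹ + (1 - xn n)

lemma cb_nonneg (n : ℕ) : 0 ≤ cb n :=
  add_nonneg (Real.sqrt_nonneg _) (by linarith [xn_le_one n])

lemma HH_le (n : ℕ) (hn : 1 ≤ n) :
    HH (fun x : ℝ => x ^ n * (1 - x ^ n)) (fun x : ℝ => if x = 1 then (1/4 : ℝ) else 0)
      ≤ cb n := by
  apply Metric.hausdorffDist_le_of_mem_dist (cb_nonneg n)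
  · -- forward
    rintro p ⟨⟨hx0, hx1⟩, hy0, hyf⟩
    set x := p 0 with hx
    set y := p 1 with hy
    have hxn1 : x ^ n ≤ 1 := pow_le_one₀ hx0 hx1
    have hxn0 : 0 ≤ x ^ n := pow_nonneg hx0 n
    have hyf' : y ≤ x ^ n * (1 - x ^ n) := hyf
    have h1x0 : (0:ℝ) ≤ 1 - x := by linarith
    have hkey : x ^ n * (1 - x) ≤ ((n:ℝ)+1)⁻¹ := by
      have hk := key_ineq n hx0 hx1
      rw [inv_eq_one_div, le_div_iff₀ (by positivity)]
      nlinarith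
    have hprod : y * (1 - x) ≤ ((n:ℝ)+1)⁻¹ := by
      calc y * (1 - x) ≤ x ^ n * (1 - x ^ n) * (1 - x) :=
            mul_le_mul_of_nonneg_right hyf' h1x0
        _ ≤ x ^ n * (1 - x) := by nlinarith [mul_nonneg (mul_nonneg hxn0 hxn0) h1x0]
        _ ≤ _ := hkey
    by_cases hc : y ≤ 1 - x
    · refine ⟨pt x 0, ⟨⟨hx0, hx1⟩, le_refl _, ?_⟩, ?_⟩
      · show (0:ℝ) ≤ if x = 1 then 1/4 else 0
        split <;> norm_num
      · have hd := dist_le_pt p x 0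
        have hy2 : y ^ 2 ≤ ((n:ℝ)+1)⁻¹ := by nlinarith
        have : y ≤ Real.sqrt ((n:ℝ)+1)⁻¹ := by
          rw [show y = Real.sqrt (y^2) from (Real.sqrt_sq hy0).symm]
          exact Real.sqrt_le_sqrt hy2
        calc dist p (pt x 0) ≤ |x - x| + |y - 0| := hd
          _ = y := by rw [sub_self, abs_zero, sub_zero, abs_of_nonneg hy0]; ring
          _ ≤ cb n := this.trans (by unfold cb; linarith [xn_le_one n])
    · push_neg at hc
      have hy14 : y ≤ 1/4 := hyf.trans (fn_le_quarter n hx0 hx1)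
      refine ⟨pt 1 y, ⟨⟨zero_le_one, le_refl _⟩, hy0, ?_⟩, ?_⟩
      · show y ≤ if (1:ℝ) = 1 then 1/4 else 0
        rw [if_pos rfl]; exact hy14
      · have h1x : 0 ≤ 1 - x := by linarith
        have h1x2 : (1 - x) ^ 2 ≤ ((n:ℝ)+1)⁻¹ := by nlinarith
        have : 1 - x ≤ Real.sqrt ((n:ℝ)+1)⁻¹ := by
          rw [show (1:ℝ) - x = Real.sqrt ((1-x)^2) from (Real.sqrt_sq h1x).symm]
          exact Real.sqrt_le_sqrt h1x2
        calc dist p (pt 1 y) ≤ |x - 1| + |y - y| := dist_le_pt p 1 y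
          _ = 1 - x := by rw [sub_self, abs_zero, abs_of_nonpos (by linarith)]; ring
          _ ≤ cb n := this.trans (by unfold cb; linarith [xn_le_one n])
  · -- backward
    rintro q ⟨⟨hx0, hx1⟩, ht0, htf⟩
    set x := q 0 with hx
    set t := q 1 with ht
    by_cases hc : x = 1
    · replace htf : t ≤ 1/4 := by rw [hc] at htf; simpa using htf
      refine ⟨pt (xn n) t, ⟨⟨(xn_pos n).le, xn_le_one n⟩, ht0, ?_⟩, ?_⟩
      · show t ≤ xn n ^ n * (1 - xn n ^ n)
        rw [xn_pow n hn]; norm_num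
        linarith
      · calc dist q (pt (xn n) t) ≤ |x - xn n| + |t - t| := dist_le_pt q (xn n) t
          _ = x - xn n := by
              rw [sub_self, abs_zero, abs_of_nonneg (by rw [hc]; linarith [xn_le_one n])]; ring
          _ ≤ cb n := by unfold cb; rw [hc]; linarith [Real.sqrt_nonneg ((n:ℝ)+1)⁻¹]
    · replace htf : t ≤ 0 := by simpa [hc] using htf
      have ht00 : t = 0 := le_antisymm htf ht0
      refine ⟨pt x 0, ⟨⟨hx0, hx1⟩, le_refl _, fn_nonneg n hx0 hx1⟩, ?_⟩
      calc dist q (pt x 0) ≤ |x - x| + |t - 0| := dist_le_pt q x 0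
        _ = 0 := by rw [sub_self, abs_zero, ht00, sub_zero, abs_zero]; ring
        _ ≤ cb n := cb_nonneg n

lemma cb_tendsto : Tendsto cb atTop (nhds 0) := by
  have h1 : Tendsto (fun n : ℕ => Real.sqrt ((n:ℝ)+1)⁻¹) atTop (nhds 0) := by
    have : Tendsto (fun n : ℕ => ((n:ℝ)+1)⁻¹) atTop (nhds 0) := by
      simpa using tendsto_one_div_add_atTop_nhds_zero_nat (𝕜 := ℝ)
    have h := (Real.continuous_sqrt.tendsto 0).comp this
    simpa only [Function.comp_def, Real.sqrt_zero] using h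
  have h2 : Tendsto (fun n : ℕ => 1 - xn n) atTop (nhds 0) := by
    have hinv : Tendsto (fun n : ℕ => -(n:ℝ)⁻¹) atTop (nhds 0) := by
      have h := (tendsto_inv_atTop_zero.comp (tendsto_natCast_atTop_atTop (R := ℝ))).neg
      simpa only [Function.comp_def, neg_zero] using h
    have hcont : Continuous (fun y : ℝ => (2:ℝ) ^ y) := by
      have : (fun y : ℝ => (2:ℝ) ^ y) = fun y => Real.exp (Real.log 2 * y) := by
        funext y; rw [Real.rpow_def_of_pos two_pos]
      rw [this]; exact Real.continuous_exp.comp (continuous_const.mul continuous_id)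
    have : Tendsto (fun n : ℕ => xn n) atTop (nhds 1) := by
      have := (hcont.tendsto 0).comp hinv
      simpa [xn, Real.rpow_zero, Function.comp_def] using this
    simpa using (tendsto_const_nhds (x := (1:ℝ))).sub this
  have h := h1.add h2
  rw [add_zero] at h
  exact h

lemma HH_lb (n : ℕ) (hn : 1 ≤ n) :
    1/4 ≤ HH (fun x : ℝ => x ^ n * (1 - x ^ n)) (fun _ : ℝ => (0:ℝ)) := by
  have hne : EMetric.hausdorffEdist (hypo (fun x : ℝ => x ^ n * (1 - x ^ n)))
      (hypo (fun _ : ℝ => (0:ℝ))) ≠ ⊤ := by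
    apply Metric.hausdorffEdist_ne_top_of_nonempty_of_bounded
    · exact hypo_nonempty _ (fn_nonneg n le_rfl zero_le_one)
    · exact hypo_nonempty _ le_rfl
    · exact hypo_bounded (fun x hx => fn_le_one n hx.1 hx.2)
    · exact hypo_bounded (fun x _ => zero_le_one)
  have hp : pt (xn n) (1/4) ∈ hypo (fun x : ℝ => x ^ n * (1 - x ^ n)) := by
    refine ⟨⟨(xn_pos n).le, xn_le_one n⟩, by show (0:ℝ) ≤ 1/4; norm_num, ?_⟩
    show (1/4:ℝ) ≤ xn n ^ n * (1 - xn n ^ n)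
    rw [xn_pow n hn]; norm_num
  have hinf : 1/4 ≤ Metric.infDist (pt (xn n) (1/4)) (hypo (fun _ : ℝ => (0:ℝ))) := by
    have hle : ENNReal.ofReal (1/4) ≤ EMetric.infEdist (pt (xn n) (1/4))
        (hypo (fun _ : ℝ => (0:ℝ))) := by
      refine Metric.le_infEDist.mpr ?_
      rintro q ⟨_, hq0, hq1⟩
      have hq : q 1 = 0 := le_antisymm hq1 hq0
      have hd := coord_le_dist (pt (xn n) (1/4)) q 1
      have hpt : pt (xn n) (1/4) 1 = 1/4 := rfl
      rw [hpt, hq, sub_zero] at hd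
      rw [edist_dist]
      apply ENNReal.ofReal_le_ofReal
      calc (1/4:ℝ) = |(1/4:ℝ)| := (abs_of_pos (by norm_num)).symm
        _ ≤ _ := hd
    have hfin : EMetric.infEdist (pt (xn n) (1/4)) (hypo (fun _ : ℝ => (0:ℝ))) ≠ ⊤ :=
      Metric.infEdist_ne_top (hypo_nonempty _ le_rfl)
    have := ENNReal.toReal_mono hfin hle
    rwa [ENNReal.toReal_ofReal (by norm_num)] at this
  exact hinf.trans (Metric.infDist_le_hausdorffDist_of_mem hp hne)

/-- Pointwise convergence does not imply convergence in `ℍ`: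
`fₙ(x) = xⁿ(1 − xⁿ)` converges pointwise to `0` on `[0,1]`, yet it converges
in `ℍ` to `f₀` with `f₀(1) = 1/4`, `f₀(x) = 0` for `x ∈ [0,1)`; in particular
`ℍ(fₙ, 0)` does not converge to `0`. -/
theorem stmt_5 :
    (∀ x ∈ Set.Icc (0:ℝ) 1,
      Filter.Tendsto (fun n : ℕ => x ^ n * (1 - x ^ n)) Filter.atTop (nhds 0)) ∧
    Filter.Tendsto
      (fun n : ℕ => HH (fun x : ℝ => x ^ n * (1 - x ^ n))
        (fun x : ℝ => if x = 1 then (1/4 : ℝ) else 0))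
      Filter.atTop (nhds 0) ∧
    ¬ Filter.Tendsto
      (fun n : ℕ => HH (fun x : ℝ => x ^ n * (1 - x ^ n)) (fun _ : ℝ => (0:ℝ)))
      Filter.atTop (nhds 0) := by
  refine ⟨?_, ?_, ?_⟩
  · rintro x ⟨hx0, hx1⟩
    rcases eq_or_lt_of_le hx1 with h | h
    · subst h
      simpa using tendsto_const_nhds (x := (0:ℝ)) (f := atTop (α := ℕ))
    · have hp : Tendsto (fun n : ℕ => x ^ n) atTop (nhds 0) :=
        tendsto_pow_atTop_nhds_zero_of_lt_one hx0 h
      have := hp.mul (tendsto_const_nhds (x := (1:ℝ)).sub hp)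
      simpa using this
  · apply tendsto_of_tendsto_of_tendsto_of_le_of_le' tendsto_const_nhds cb_tendsto
    · exact Eventually.of_forall fun n => Metric.hausdorffDist_nonneg
    · filter_upwards [eventually_ge_atTop 1] with n hn
      exact HH_le n hn
  · intro h
    obtain ⟨n, hlt, hn⟩ := ((h.eventually (gt_mem_nhds (by norm_num : (0:ℝ) < 1/4))).and
      (eventually_ge_atTop 1)).exists
    exact absurd (HH_lb n hn) (not_le.mpr hlt)
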